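/- Assume in addition that ε·μ ≥ 2/3 (which holds for any admissible pair with μ ≠ 1 and Δ ≠ −3). Let an infinite run (N = ∞) of the continued fraction algorithm on input z ∈ ℂ be given. Then z is badly approximable over 𝒪 if and only if the sequence of coefficients (a_n)_{n≥1} is bounded, i.e., sup_{n≥1} |a_n| < ∞. -/

import Mathlib

noncomputable section

namespace CFNE

/-- τ = (Δ + i·√|Δ|)/2. -/
def tau (Δ : ℤ) : ℂ := ((Δ : ℂ) + Complex.I * (Real.sqrt |(Δ : ℝ)|)) / 2

/-- The imaginary quadratic order 𝒪 = ℤ[τ] of discriminant Δ, as a subring of ℂ. -/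
def O (Δ : ℤ) : Subring ℂ := Subring.closure {tau Δ}

lemma CFaux_htau2 {Δ : ℤ} (hΔneg : Δ < 0) {k0 : ℤ} (hk0 : Δ^2 - Δ = 4 * k0) :
    tau Δ * tau Δ = Δ * tau Δ - k0 := by
  have h1 : Real.sqrt |(Δ : ℝ)| * Real.sqrt |(Δ : ℝ)| = |(Δ : ℝ)| := Real.mul_self_sqrt (abs_nonneg _)
  have h2 : |(Δ : ℝ)| = -(Δ : ℝ) := abs_of_neg (by exact_mod_cast hΔneg)
  have hsq : ((Real.sqrt |(Δ : ℝ)| : ℝ) : ℂ) * ((Real.sqrt |(Δ : ℝ)| : ℝ) : ℂ) = -(Δ : ℂ) := by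
    rw [← Complex.ofReal_mul, h1, h2]
    push_cast
    ring
  have hI : Complex.I * Complex.I = -1 := Complex.I_mul_I
  have hk0c : (Δ : ℂ)^2 - (Δ : ℂ) = 4 * (k0 : ℂ) := by exact_mod_cast congrArg (fun t : ℤ => (t : ℂ)) hk0
  simp only [tau]
  linear_combination (((Real.sqrt |(Δ : ℝ)| : ℝ) : ℂ) * ((Real.sqrt |(Δ : ℝ)| : ℝ) : ℂ) / 4) * hI
    - (1/4 : ℂ) * hsq - (1/4 : ℂ) * hk0c

lemma CFaux_mem_O {Δ : ℤ} {k0 : ℤ} (h : tau Δ * tau Δ = Δ * tau Δ - k0)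
    {x : ℂ} (hx : x ∈ O Δ) : ∃ m n : ℤ, x = m + n * tau Δ := by
  induction hx using Subring.closure_induction with
  | mem w hw => exact ⟨0, 1, by rw [Set.mem_singleton_iff.mp hw]; push_cast; ring⟩
  | one => exact ⟨1, 0, by push_cast; ring⟩
  | zero => exact ⟨0, 0, by push_cast; ring⟩
  | add a b _ _ ha hb =>
      obtain ⟨m, n, rfl⟩ := ha; obtain ⟨m', n', rfl⟩ := hb
      exact ⟨m + m', n + n', by push_cast; ring⟩
  | neg a _ ha => obtain ⟨m, n, rfl⟩ := ha; exact ⟨-m, -n, by push_cast; ring⟩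
  | mul a b _ _ ha hb =>
      obtain ⟨m, n, rfl⟩ := ha; obtain ⟨m', n', rfl⟩ := hb
      refine ⟨m * m' - n * n' * k0, m * n' + n * m' + n * n' * Δ, ?_⟩
      push_cast
      linear_combination ((n:ℂ) * (n':ℂ)) * h

/-- Any nonzero element of the order has absolute value at least 1. -/
lemma CFaux_one_le_abs {Δ : ℤ} (hΔneg : Δ < 0) (hΔmod : Δ % 4 = 0 ∨ Δ % 4 = 1)
    {x : ℂ} (hx : x ∈ O Δ) (hx0 : x ≠ 0) : 1 ≤ ‖x‖ := by
  obtain ⟨k0, hk0⟩ : ∃ k0 : ℤ, Δ^2 - Δ = 4 * k0 := by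
    rcases hΔmod with h | h
    · obtain ⟨m, rfl⟩ : ∃ m, Δ = 4 * m := ⟨Δ / 4, by omega⟩
      exact ⟨4 * m^2 - m, by ring⟩
    · obtain ⟨m, rfl⟩ : ∃ m, Δ = 4 * m + 1 := ⟨Δ / 4, by omega⟩
      exact ⟨4 * m^2 + m, by ring⟩
  have h2 := CFaux_htau2 hΔneg hk0
  obtain ⟨m, n, rfl⟩ := CFaux_mem_O h2 hx
  have hconj : (starRingEnd ℂ) (tau Δ) = (Δ : ℂ) - tau Δ := by
    simp only [tau, map_div₀, map_add, map_mul, Complex.conj_I, map_intCast, map_ofNat,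
      Complex.conj_ofReal]
    ring
  have key : ((Complex.normSq (m + n * tau Δ) : ℝ) : ℂ) = ((m^2 + m*n*Δ + n^2*k0 : ℤ) : ℂ) := by
    rw [← Complex.mul_conj]
    rw [map_add, map_mul, hconj, map_intCast, map_intCast]
    push_cast
    linear_combination (-(n:ℂ)^2) * h2
  have hK : Complex.normSq (m + n * tau Δ) = ((m^2 + m*n*Δ + n^2*k0 : ℤ) : ℝ) := by
    exact_mod_cast key
  have hpos : 0 < Complex.normSq (m + n * tau Δ) := Complex.normSq_pos.mpr hx0
  have hge1 : (1 : ℤ) ≤ m^2 + m*n*Δ + n^2*k0 := by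
    have : (0 : ℝ) < ((m^2 + m*n*Δ + n^2*k0 : ℤ) : ℝ) := hK ▸ hpos
    exact_mod_cast this
  have h1 : (1 : ℝ) ≤ Complex.normSq (m + n * tau Δ) := by
    rw [hK]; exact_mod_cast hge1
  have habs := Complex.sq_norm (m + n * tau Δ)
  nlinarith [norm_nonneg (m + n * tau Δ)]

/-- A (nonzero or zero) ideal of 𝒪, presented as a subset of ℂ. -/
structure IdealS (Δ : ℤ) where
  carrier : Set ℂ
  subset : carrier ⊆ (O Δ : Set ℂ)
  zero_mem : (0 : ℂ) ∈ carrier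
  add_mem : ∀ x ∈ carrier, ∀ y ∈ carrier, x + y ∈ carrier
  neg_mem : ∀ x ∈ carrier, -x ∈ carrier
  smul_mem : ∀ r ∈ (O Δ : Set ℂ), ∀ x ∈ carrier, r * x ∈ carrier

/-- The ideal as an additive subgroup of ℂ. -/
def IdealS.toAddSubgroup {Δ : ℤ} (I : IdealS Δ) : AddSubgroup ℂ where
  carrier := I.carrier
  zero_mem' := I.zero_mem
  add_mem' := fun hx hy => I.add_mem _ hx _ hy
  neg_mem' := fun hx => I.neg_mem _ hx

/-- The norm of an ideal: the index [𝒪 : 𝔟]. -/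
def IdealS.norm {Δ : ℤ} (I : IdealS Δ) : ℕ :=
  I.toAddSubgroup.relIndex (O Δ).toAddSubgroup

/-- The ideal is nonzero. -/
def IdealS.Nonzero {Δ : ℤ} (I : IdealS Δ) : Prop := ∃ x ∈ I.carrier, x ≠ 0

/-- Two nonzero ideals lie in the same class if x·𝔞 = y·𝔟 for some nonzero x, y ∈ 𝒪. -/
def SameClass {Δ : ℤ} (I J : IdealS Δ) : Prop :=
  ∃ x ∈ (O Δ : Set ℂ), ∃ y ∈ (O Δ : Set ℂ), x ≠ 0 ∧ y ≠ 0 ∧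
    (fun t => x * t) '' I.carrier = (fun t => y * t) '' J.carrier

/-- A reduced ideal: a nonzero ideal of minimal norm in its ideal class. -/
def IsReduced {Δ : ℤ} (I : IdealS Δ) : Prop :=
  I.Nonzero ∧ ∀ J : IdealS Δ, J.Nonzero → SameClass I J → I.norm ≤ J.norm

/-- The inverse fractional ideal 𝔟⁻¹ = {x ∈ ℂ : x·𝔟 ⊆ 𝒪}. -/
def invSet {Δ : ℤ} (I : IdealS Δ) : Set ℂ :=
  {x : ℂ | ∀ y ∈ I.carrier, x * y ∈ (O Δ : Set ℂ)}

/-- The fractional ideal a·𝔟 + b·𝔟⁻¹, as a subset of ℂ. -/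
def combSet {Δ : ℤ} (I : IdealS Δ) (a b : ℂ) : Set ℂ :=
  {u : ℂ | ∃ s ∈ I.carrier, ∃ t ∈ invSet I, u = a * s + b * t}

/-- The ideal x·𝒪 + y·𝒪 of 𝒪 generated by x and y, as a subset of ℂ. -/
def genSet (Δ : ℤ) (x y : ℂ) : Set ℂ :=
  {u : ℂ | ∃ s ∈ (O Δ : Set ℂ), ∃ t ∈ (O Δ : Set ℂ), u = x * s + y * t}

/-- The set is the carrier of a reduced ideal of 𝒪. -/
def IsReducedSet (Δ : ℤ) (S : Set ℂ) : Prop :=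
  ∃ J : IdealS Δ, IsReduced J ∧ J.carrier = S

/-- B is admissible with ε ∈ (0,1): B is a nonempty finite subset of 𝒪 ∖ {0}, and for every
reduced ideal 𝔟 with 𝔟 ∩ B ≠ ∅, the discs D(a/b, ε/|b|) over b ∈ 𝔟 ∩ B, a ∈ 𝔟⁻¹ with
a·𝔟 + b·𝔟⁻¹ reduced, cover ℂ. -/
def Admissible (Δ : ℤ) (B : Set ℂ) (ε : ℝ) : Prop :=
  B.Nonempty ∧ B.Finite ∧ B ⊆ (O Δ : Set ℂ) ∧ (0 : ℂ) ∉ B ∧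
  ∀ I : IdealS Δ, IsReduced I → (I.carrier ∩ B).Nonempty →
    ∀ z : ℂ, ∃ b ∈ I.carrier ∩ B, ∃ a ∈ invSet I,
      IsReducedSet Δ (combSet I a b) ∧ ‖z - a / b‖ ≤ ε / ‖b‖

/-- μ = max{|b| : b ∈ B}. -/
def mu (B : Set ℂ) : ℝ := sSup ((fun x : ℂ => ‖x‖) '' B)

/-- A run of the continued fraction algorithm of length N ∈ ℕ ∪ {∞} on input z. -/
structure Run (Δ : ℤ) (B : Set ℂ) (ε : ℝ) (z : ℂ) (N : ℕ∞) where
  a : ℤ → ℂ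
  b : ℤ → ℂ
  p : ℤ → ℂ
  q : ℤ → ℂ
  zs : ℤ → ℂ
  b_zero : b 0 = 1
  p_neg_one : p (-1) = 0
  q_neg_one : q (-1) = 1
  p_zero : p 0 = 1
  q_zero : q 0 = 0
  zs_zero : zs 0 = z
  ha : ∀ n : ℕ, 1 ≤ n → (n : ℕ∞) ≤ N → a n ∈ O Δ
  hb : ∀ n : ℕ, 1 ≤ n → (n : ℕ∞) ≤ N → b n ∈ B
  hne : ∀ n : ℕ, 1 ≤ n → (n : ℕ∞) ≤ N → b n * zs ((n : ℤ) - 1) - a n ≠ 0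
  hclose : ∀ n : ℕ, 1 ≤ n → (n : ℕ∞) ≤ N →
    ‖b n * zs ((n : ℤ) - 1) - a n‖ ≤ ε * ‖b ((n : ℤ) - 1)‖
  hp : ∀ n : ℕ, 1 ≤ n → (n : ℕ∞) ≤ N →
    p n = (a n * p ((n : ℤ) - 1) + b n * p ((n : ℤ) - 2)) / b ((n : ℤ) - 1)
  hq : ∀ n : ℕ, 1 ≤ n → (n : ℕ∞) ≤ N →
    q n = (a n * q ((n : ℤ) - 1) + b n * q ((n : ℤ) - 2)) / b ((n : ℤ) - 1)
  hz : ∀ n : ℕ, 1 ≤ n → (n : ℕ∞) ≤ N →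
    zs n = b ((n : ℤ) - 1) / (b n * zs ((n : ℤ) - 1) - a n)
  hpO : ∀ n : ℕ, 1 ≤ n → (n : ℕ∞) ≤ N → p n ∈ O Δ
  hqO : ∀ n : ℕ, 1 ≤ n → (n : ℕ∞) ≤ N → q n ∈ O Δ
  hred : ∀ n : ℕ, 1 ≤ n → (n : ℕ∞) ≤ N → IsReducedSet Δ (genSet Δ (p n) (q n))

/-- z is badly approximable over 𝒪. -/
def BadlyApproximable (Δ : ℤ) (z : ℂ) : Prop :=
  ∃ c : ℝ, 0 < c ∧ ∀ p q : ℂ, p ∈ O Δ → q ∈ O Δ → q ≠ 0 →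
    c ≤ ‖q * (q * z - p)‖

section Seq

variable {Δ : ℤ} {B : Set ℂ} {ε : ℝ} {z : ℂ}

/-- Shifted numerator sequence: `PP R n = p (n-1)`. -/
def PP (R : Run Δ B ε z ⊤) : ℕ → ℂ := fun n => R.p ((n : ℤ) - 1)
/-- Shifted denominator sequence: `QQ R n = q (n-1)`. -/
def QQ (R : Run Δ B ε z ⊤) : ℕ → ℂ := fun n => R.q ((n : ℤ) - 1)
/-- Coefficient sequence. -/
def AA (R : Run Δ B ε z ⊤) : ℕ → ℂ := fun n => R.a (n : ℤ)
def BBf (R : Run Δ B ε z ⊤) : ℕ → ℂ := fun n => R.b (n : ℤ)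
def ZZ (R : Run Δ B ε z ⊤) : ℕ → ℂ := fun n => R.zs (n : ℤ)
/-- `TH R n = q (n-1) * z - p (n-1)`. -/
def TH (R : Run Δ B ε z ⊤) : ℕ → ℂ := fun n => QQ R n * z - PP R n
/-- `DD R n = b n * zs (n-1) - a n`, shifted so that `DD R n` is δ_{n+1}. -/
def DD (R : Run Δ B ε z ⊤) : ℕ → ℂ := fun n => BBf R (n+1) * ZZ R n - AA R (n+1)

variable (R : Run Δ B ε z ⊤)

lemma qq_succ (n : ℕ) : QQ R (n+1) = R.q (n : ℤ) := by
  simp only [QQ]; congr 1; push_cast; ring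

lemma pp_succ (n : ℕ) : PP R (n+1) = R.p (n : ℤ) := by
  simp only [PP]; congr 1; push_cast; ring

lemma qq_zero : QQ R 0 = 1 := by simp only [QQ]; norm_num [R.q_neg_one]
lemma pp_zero : PP R 0 = 0 := by simp only [PP]; norm_num [R.p_neg_one]
lemma qq_one : QQ R 1 = 0 := by rw [qq_succ]; norm_num [R.q_zero]
lemma pp_one : PP R 1 = 1 := by rw [pp_succ]; norm_num [R.p_zero]
lemma bb_zero : BBf R 0 = 1 := by simp only [BBf]; norm_num [R.b_zero]
lemma zz_zero : ZZ R 0 = z := by simp only [ZZ]; norm_num [R.zs_zero]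
lemma th_zero : TH R 0 = z := by simp [TH, qq_zero, pp_zero]
lemma th_one : TH R 1 = -1 := by simp [TH, qq_one, pp_one]

lemma bb_mem (n : ℕ) : BBf R (n+1) ∈ B := R.hb (n+1) (by omega) le_top
lemma aa_mem (n : ℕ) : AA R (n+1) ∈ O Δ := R.ha (n+1) (by omega) le_top
lemma pp_mem2 (n : ℕ) : PP R (n+2) ∈ O Δ := by
  rw [show PP R (n+2) = R.p ((n+1 : ℕ) : ℤ) from by simp only [PP]; congr 1; push_cast; ring]
  exact R.hpO (n+1) (by omega) le_top
lemma qq_mem2 (n : ℕ) : QQ R (n+2) ∈ O Δ := by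
  rw [show QQ R (n+2) = R.q ((n+1 : ℕ) : ℤ) from by simp only [QQ]; congr 1; push_cast; ring]
  exact R.hqO (n+1) (by omega) le_top
lemma pp_mem (n : ℕ) : PP R n ∈ O Δ := by
  match n with
  | 0 => rw [pp_zero]; exact zero_mem _
  | 1 => rw [pp_one]; exact one_mem _
  | (n+2) => exact pp_mem2 R n
lemma qq_mem (n : ℕ) : QQ R n ∈ O Δ := by
  match n with
  | 0 => rw [qq_zero]; exact one_mem _
  | 1 => rw [qq_one]; exact zero_mem _
  | (n+2) => exact qq_mem2 R n

lemma hrecq (hbne : ∀ n : ℕ, BBf R n ≠ 0) (n : ℕ) :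
    QQ R (n+2) * BBf R n = AA R (n+1) * QQ R (n+1) + BBf R (n+1) * QQ R n := by
  have h := R.hq (n+1) (by omega) le_top
  have i0 : ((n+1 : ℕ) : ℤ) = (n : ℤ) + 1 := by push_cast; ring
  have i1 : ((n+1 : ℕ) : ℤ) - 1 = (n : ℤ) := by push_cast; ring
  have i2 : ((n+1 : ℕ) : ℤ) - 2 = (n : ℤ) - 1 := by push_cast; ring
  rw [i1, i2] at h
  rw [qq_succ, qq_succ]
  show R.q ((n+1:ℕ) : ℤ) * R.b (n:ℤ) = _ * R.q (n:ℤ) + _ * R.q ((n:ℤ)-1)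
  rw [h]
  exact div_mul_cancel₀ _ (hbne n)

lemma hrecp (hbne : ∀ n : ℕ, BBf R n ≠ 0) (n : ℕ) :
    PP R (n+2) * BBf R n = AA R (n+1) * PP R (n+1) + BBf R (n+1) * PP R n := by
  have h := R.hp (n+1) (by omega) le_top
  have i1 : ((n+1 : ℕ) : ℤ) - 1 = (n : ℤ) := by push_cast; ring
  have i2 : ((n+1 : ℕ) : ℤ) - 2 = (n : ℤ) - 1 := by push_cast; ring
  rw [i1, i2] at h
  rw [pp_succ, pp_succ]
  show R.p ((n+1:ℕ) : ℤ) * R.b (n:ℤ) = _ * R.p (n:ℤ) + _ * R.p ((n:ℤ)-1)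
  rw [h]
  exact div_mul_cancel₀ _ (hbne n)

lemma dd_ne (n : ℕ) : DD R n ≠ 0 := by
  have h := R.hne (n+1) (by omega) le_top
  have i1 : ((n+1 : ℕ) : ℤ) - 1 = (n : ℤ) := by push_cast; ring
  rw [i1] at h
  exact h

lemma dd_le (n : ℕ) : ‖DD R n‖ ≤ ε * ‖BBf R n‖ := by
  have h := R.hclose (n+1) (by omega) le_top
  have i1 : ((n+1 : ℕ) : ℤ) - 1 = (n : ℤ) := by push_cast; ring
  rw [i1] at h
  exact h

lemma hrecz (n : ℕ) : ZZ R (n+1) * DD R n = BBf R n := by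
  have h := R.hz (n+1) (by omega) le_top
  have i1 : ((n+1 : ℕ) : ℤ) - 1 = (n : ℤ) := by push_cast; ring
  rw [i1] at h
  show R.zs ((n+1:ℕ):ℤ) * (R.b ((n+1:ℕ):ℤ) * R.zs (n:ℤ) - R.a ((n+1:ℕ):ℤ)) = R.b (n:ℤ)
  rw [h]
  exact div_mul_cancel₀ _ (dd_ne R n)

lemma hrecth (hbne : ∀ n : ℕ, BBf R n ≠ 0) (n : ℕ) :
    BBf R n * TH R (n+2) = AA R (n+1) * TH R (n+1) + BBf R (n+1) * TH R n := by
  simp only [TH]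
  linear_combination z * hrecq R hbne n - hrecp R hbne n

/-- Key identity: θ_{n-1} = -z_n · θ_n, in shifted form. -/
lemma hG (hbne : ∀ n : ℕ, BBf R n ≠ 0) (n : ℕ) :
    TH R (n+1) = -(ZZ R (n+1)) * TH R (n+2) := by
  induction n with
  | zero =>
      have hq1 : QQ R 2 = BBf R 1 := by
        have := hrecq R hbne 0
        rw [qq_zero, qq_one, bb_zero] at this
        simpa using this
      have hp1 : PP R 2 = AA R 1 := by
        have := hrecp R hbne 0
        rw [pp_zero, pp_one, bb_zero] at this
        simpa using this
      have hz1 : ZZ R 1 * DD R 0 = 1 := by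
        have := hrecz R 0; rwa [bb_zero] at this
      have hdd0 : DD R 0 = BBf R 1 * z - AA R 1 := by
        simp only [DD]; rw [zz_zero]
      rw [th_one]
      simp only [TH]
      rw [hq1, hp1]
      rw [hdd0] at hz1
      linear_combination hz1
  | succ n ih =>
      have hA := hrecth R hbne (n+1)
      have hC := hrecz R (n+1)
      have hCd : ZZ R (n+2) * (BBf R (n+2) * ZZ R (n+1) - AA R (n+2)) = BBf R (n+1) := by
        have : DD R (n+1) = BBf R (n+2) * ZZ R (n+1) - AA R (n+2) := rfl
        rw [← this]; exact hC
      have key : BBf R (n+1) * (TH R (n+2) + ZZ R (n+2) * TH R (n+3)) = 0 := by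
        linear_combination (ZZ R (n+2)) * hA + (BBf R (n+2) * ZZ R (n+2)) * ih
          - (TH R (n+2)) * hCd
      rcases mul_eq_zero.mp key with h | h
      · exact absurd h (hbne (n+1))
      · linear_combination h

lemma hE (hbne : ∀ n : ℕ, BBf R n ≠ 0) (n : ℕ) :
    BBf R n * TH R (n+2) = -(TH R (n+1)) * DD R n := by
  match n with
  | 0 =>
      have hq1 : QQ R 2 = BBf R 1 := by
        have := hrecq R hbne 0
        rw [qq_zero, qq_one, bb_zero] at this
        simpa using this
      have hp1 : PP R 2 = AA R 1 := by
        have := hrecp R hbne 0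
        rw [pp_zero, pp_one, bb_zero] at this
        simpa using this
      rw [bb_zero, th_one]
      simp only [TH, DD]
      rw [hq1, hp1, zz_zero]
      ring
  | (n+1) =>
      have hA := hrecth R hbne (n+1)
      have hB := hG R hbne n
      simp only [DD]
      linear_combination hA + (BBf R (n+2)) * hB

lemma th_ne (hbne : ∀ n : ℕ, BBf R n ≠ 0) : ∀ n, TH R (n+1) ≠ 0 := by
  intro n
  induction n with
  | zero => rw [th_one]; simp
  | succ k ih =>
      intro h0
      exact ih (by rw [hG R hbne k, h0, mul_zero])

lemma th_dec (hbne : ∀ n : ℕ, BBf R n ≠ 0) (hε0 : 0 ≤ ε) (n : ℕ) :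
    ‖TH R (n+2)‖ ≤ ε * ‖TH R (n+1)‖ := by
  have hE' := hE R hbne n
  have hbpos : 0 < ‖BBf R n‖ :=
    norm_pos_iff.mpr (hbne n)
  have h1 : ‖BBf R n‖ * ‖TH R (n+2)‖
      = ‖TH R (n+1)‖ * ‖DD R n‖ := by
    rw [← norm_mul, hE', neg_mul, norm_neg, norm_mul]
  have h2 : ‖TH R (n+1)‖ * ‖DD R n‖
      ≤ ‖TH R (n+1)‖ * (ε * ‖BBf R n‖) :=
    mul_le_mul_of_nonneg_left (dd_le R n) (norm_nonneg _)
  have h3 : ‖BBf R n‖ * ‖TH R (n+2)‖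
      ≤ ‖BBf R n‖ * (ε * ‖TH R (n+1)‖) := by
    calc ‖BBf R n‖ * ‖TH R (n+2)‖
        ≤ ‖TH R (n+1)‖ * (ε * ‖BBf R n‖) := h1 ▸ h2
      _ = ‖BBf R n‖ * (ε * ‖TH R (n+1)‖) := by ring
  exact le_of_mul_le_mul_left h3 hbpos

lemma th_pow (hbne : ∀ n : ℕ, BBf R n ≠ 0) (hε0 : 0 ≤ ε) (n : ℕ) :
    ‖TH R (n+1)‖ ≤ ε ^ n := by
  induction n with
  | zero => rw [th_one]; simp
  | succ k ih =>
      calc ‖TH R (k+2)‖ ≤ ε * ‖TH R (k+1)‖ := th_dec R hbne hε0 k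
        _ ≤ ε * ε ^ k := mul_le_mul_of_nonneg_left ih hε0
        _ = ε ^ (k+1) := by ring

lemma hD (hbne : ∀ n : ℕ, BBf R n ≠ 0) (n : ℕ) :
    PP R (n+1) * QQ R n - PP R n * QQ R (n+1) = (-1)^n * BBf R n := by
  induction n with
  | zero => rw [pp_zero, pp_one, qq_zero, qq_one, bb_zero]; norm_num
  | succ k ih =>
      have key : (PP R (k+2) * QQ R (k+1) - PP R (k+1) * QQ R (k+2)
          - (-1)^(k+1) * BBf R (k+1)) * BBf R k = 0 := by
        linear_combination (QQ R (k+1)) * hrecp R hbne k - (PP R (k+1)) * hrecq R hbne k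
          - (BBf R (k+1)) * ih
      rcases mul_eq_zero.mp key with h | h
      · linear_combination h
      · exact absurd h (hbne k)

lemma hF5 (hbne : ∀ n : ℕ, BBf R n ≠ 0) (n : ℕ) :
    QQ R (n+2) * TH R (n+1) - QQ R (n+1) * TH R (n+2) = (-1)^(n+1) * BBf R (n+1) := by
  simp only [TH]
  linear_combination hD R hbne (n+1)

lemma qq_two (hbne : ∀ n : ℕ, BBf R n ≠ 0) : QQ R 2 = BBf R 1 := by
  have := hrecq R hbne 0
  rw [qq_zero, qq_one, bb_zero] at this
  simpa using this

lemma hv (hbne : ∀ n : ℕ, BBf R n ≠ 0) (hbleμ : ∀ n : ℕ, ‖BBf R n‖ ≤ mu B)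
    (hμ1 : 1 ≤ mu B) (hε0 : 0 < ε) (hε1 : ε < 1) (n : ℕ) :
    ‖QQ R (n+2) * TH R (n+1)‖ ≤ mu B / (1 - ε * ε) := by
  have hd : (0:ℝ) < 1 - ε * ε := by nlinarith
  have hμV : mu B ≤ mu B / (1 - ε * ε) := by
    rw [le_div_iff₀ hd]
    nlinarith [mul_pos hε0 hε0]
  induction n with
  | zero =>
      rw [qq_two R hbne, th_one]
      calc ‖BBf R 1 * -1‖ = ‖BBf R 1‖ := by
            rw [norm_mul]; simp
        _ ≤ mu B := hbleμ 1
        _ ≤ mu B / (1 - ε * ε) := hμV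
  | succ k ih =>
      have h5 := hF5 R hbne (k+1)
      have he : QQ R (k+3) * TH R (k+2)
          = (-1)^(k+2) * BBf R (k+2) + QQ R (k+2) * TH R (k+3) := by
        linear_combination h5
      have h6 : ‖QQ R (k+3) * TH R (k+2)‖
          ≤ ‖(-1:ℂ)^(k+2) * BBf R (k+2)‖ + ‖QQ R (k+2) * TH R (k+3)‖ := by
        rw [he]; exact norm_add_le _ _
      have h7 : ‖(-1:ℂ)^(k+2) * BBf R (k+2)‖ ≤ mu B := by
        rw [norm_mul, norm_pow, norm_neg, norm_one, one_pow, one_mul]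
        exact hbleμ (k+2)
      have h8 : ‖QQ R (k+2) * TH R (k+3)‖
          ≤ ε * (ε * ‖QQ R (k+2) * TH R (k+1)‖) := by
        rw [norm_mul, norm_mul]
        have d1 := th_dec R hbne (le_of_lt hε0) (k+1)
        have d2 := th_dec R hbne (le_of_lt hε0) k
        have hq0 : (0:ℝ) ≤ ‖QQ R (k+2)‖ := norm_nonneg _
        nlinarith [norm_nonneg (TH R (k+3)), norm_nonneg (TH R (k+2)),
          norm_nonneg (TH R (k+1)), mul_le_mul_of_nonneg_left d1 hq0,
          mul_le_mul_of_nonneg_left d2 (mul_nonneg (le_of_lt hε0) hq0)]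
      have h9 : ε * (ε * ‖QQ R (k+2) * TH R (k+1)‖) ≤ ε * ε * (mu B / (1 - ε * ε)) := by
        nlinarith [ih, mul_pos hε0 hε0, norm_nonneg (QQ R (k+2) * TH R (k+1))]
      have h10 : mu B + ε * ε * (mu B / (1 - ε * ε)) = mu B / (1 - ε * ε) := by
        rw [div_eq_mul_inv]
        have h' : (1 - ε*ε) * (1 - ε*ε)⁻¹ = 1 := mul_inv_cancel₀ hd.ne'
        linear_combination (-(mu B)) * h'
      linarith

lemma qq_ne (hΔneg : Δ < 0) (hΔmod : Δ % 4 = 0 ∨ Δ % 4 = 1)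
    (hbne : ∀ n : ℕ, BBf R n ≠ 0) (hε0 : 0 < ε) (hε1 : ε < 1) (n : ℕ) :
    QQ R (n+2) ≠ 0 := by
  intro h0
  have hth := th_ne R hbne (n+1)
  have he : TH R (n+2) = -(PP R (n+2)) := by simp only [TH]; rw [h0]; ring
  have hpne : PP R (n+2) ≠ 0 := by intro hp; rw [he, hp] at hth; simp at hth
  have h1 := CFaux_one_le_abs hΔneg hΔmod (pp_mem2 R n) hpne
  have h2 : ‖TH R (n+2)‖ ≤ ε ^ (n+1) := th_pow R hbne (le_of_lt hε0) (n+1)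
  have h3 : ε ^ (n+1) ≤ ε := pow_le_of_le_one (le_of_lt hε0) (le_of_lt hε1) (by omega)
  rw [he, norm_neg] at h2
  linarith

end Seq

set_option maxHeartbeats 2000000 in
theorem stmt12 (Δ : ℤ) (hΔneg : Δ < 0) (hΔmod : Δ % 4 = 0 ∨ Δ % 4 = 1)
    (B : Set ℂ) (ε : ℝ) (hε0 : 0 < ε) (hε1 : ε < 1) (hadm : Admissible Δ B ε)
    (hεμ : 2 / 3 ≤ ε * mu B)
    (z : ℂ) (R : Run Δ B ε z ⊤) :
    BadlyApproximable Δ z ↔ ∃ C : ℝ, ∀ n : ℕ, 1 ≤ n → ‖R.a n‖ ≤ C := by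
  obtain ⟨hBne, hBfin, hBO, hB0, -⟩ := hadm
  have habove : BddAbove ((fun x : ℂ => ‖x‖) '' B) := (hBfin.image _).bddAbove
  have hbleB : ∀ x ∈ B, ‖x‖ ≤ mu B := fun x hx => le_csSup habove ⟨x, hx, rfl⟩
  have hge1B : ∀ x ∈ B, (1:ℝ) ≤ ‖x‖ := fun x hx =>
    CFaux_one_le_abs hΔneg hΔmod (hBO hx) (by rintro rfl; exact hB0 hx)
  have hμ1 : (1:ℝ) ≤ mu B := by
    obtain ⟨b0, hb0⟩ := hBne
    exact le_trans (hge1B b0 hb0) (hbleB b0 hb0)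
  have hμ0 : (0:ℝ) < mu B := by linarith
  have hbleμ : ∀ n : ℕ, ‖BBf R n‖ ≤ mu B := by
    intro n
    match n with
    | 0 => rw [bb_zero]; simpa using hμ1
    | (n+1) => exact hbleB _ (bb_mem R n)
  have hbge1 : ∀ n : ℕ, (1:ℝ) ≤ ‖BBf R n‖ := by
    intro n
    match n with
    | 0 => rw [bb_zero]; simp
    | (n+1) => exact hge1B _ (bb_mem R n)
  have hbne : ∀ n : ℕ, BBf R n ≠ 0 := by
    intro n h
    have h1 := hbge1 n
    rw [h] at h1; simp at h1; linarith
  have hd2 : (0:ℝ) < 1 - ε * ε := by nlinarith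
  set V : ℝ := mu B / (1 - ε * ε) with hVdef
  have hV0 : 0 < V := div_pos hμ0 hd2
  constructor
  · rintro ⟨c, hc, hba⟩
    refine ⟨mu B * (‖z‖ + V / c) + ε * mu B, ?_⟩
    intro n hn
    obtain ⟨m, rfl⟩ : ∃ m, n = m + 1 := ⟨n - 1, by omega⟩
    have hVc : 0 ≤ V / c := le_of_lt (div_pos hV0 hc)
    have hzs : ‖ZZ R m‖ ≤ ‖z‖ + V / c := by
      match m with
      | 0 =>
          rw [zz_zero]; linarith
      | (k+1) =>
          have h1 : c ≤ ‖QQ R (k+2) * TH R (k+2)‖ := by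
            have h := hba (PP R (k+2)) (QQ R (k+2)) (pp_mem2 R k) (qq_mem2 R k)
              (qq_ne R hΔneg hΔmod hbne hε0 hε1 k)
            exact h
          have h2 : ‖QQ R (k+2) * TH R (k+1)‖ ≤ V := hv R hbne hbleμ hμ1 hε0 hε1 k
          have h3 : QQ R (k+2) * TH R (k+1) = -(ZZ R (k+1)) * (QQ R (k+2) * TH R (k+2)) := by
            rw [hG R hbne k]; ring
          have h4 : ‖ZZ R (k+1)‖ * ‖QQ R (k+2) * TH R (k+2)‖
              = ‖QQ R (k+2) * TH R (k+1)‖ := by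
            simp only [h3, neg_mul, norm_neg, norm_mul]
          have h5 : ‖ZZ R (k+1)‖ * c ≤ V := by
            calc ‖ZZ R (k+1)‖ * c
                ≤ ‖ZZ R (k+1)‖ * ‖QQ R (k+2) * TH R (k+2)‖ :=
                  mul_le_mul_of_nonneg_left h1 (norm_nonneg _)
              _ = ‖QQ R (k+2) * TH R (k+1)‖ := h4
              _ ≤ V := h2
          have h6 : ‖ZZ R (k+1)‖ ≤ V / c := (le_div_iff₀ hc).mpr h5
          have h7 := norm_nonneg z
          linarith
    have he : AA R (m+1) = BBf R (m+1) * ZZ R m - DD R m := by simp only [DD]; ring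
    have h7 : ‖AA R (m+1)‖
        ≤ ‖BBf R (m+1) * ZZ R m‖ + ‖DD R m‖ := by
      rw [he]
      calc ‖BBf R (m+1) * ZZ R m - DD R m‖
          ≤ ‖BBf R (m+1) * ZZ R m‖ + ‖-(DD R m)‖ := by
            rw [sub_eq_add_neg]; exact norm_add_le _ _
        _ = ‖BBf R (m+1) * ZZ R m‖ + ‖DD R m‖ := by
            rw [norm_neg]
    have h8 : ‖BBf R (m+1) * ZZ R m‖ ≤ mu B * (‖z‖ + V / c) := by
      rw [norm_mul]
      have hb1 := hbleμ (m+1)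
      have hb2 := norm_nonneg (ZZ R m)
      have hb3 := norm_nonneg (BBf R (m+1))
      nlinarith [norm_nonneg z]
    have h9 : ‖DD R m‖ ≤ ε * mu B := by
      calc ‖DD R m‖ ≤ ε * ‖BBf R m‖ := dd_le R m
        _ ≤ ε * mu B := mul_le_mul_of_nonneg_left (hbleμ m) (le_of_lt hε0)
    show ‖AA R (m+1)‖ ≤ mu B * (‖z‖ + V / c) + ε * mu B
    linarith
  · rintro ⟨C, hC⟩
    have hC' : ∀ n : ℕ, ‖AA R (n+1)‖ ≤ C := fun n => hC (n+1) (by omega)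
    have hC0 : (0:ℝ) ≤ C := le_trans (norm_nonneg _) (hC' 0)
    set Z : ℝ := C + ε * mu B with hZdef
    have hZ0 : 0 < Z := by nlinarith
    have hzZ : ∀ n : ℕ, ‖ZZ R n‖ ≤ Z := by
      intro n
      have he : BBf R (n+1) * ZZ R n = AA R (n+1) + DD R n := by simp only [DD]; ring
      have h9 : ‖DD R n‖ ≤ ε * mu B := by
        calc ‖DD R n‖ ≤ ε * ‖BBf R n‖ := dd_le R n
          _ ≤ ε * mu B := mul_le_mul_of_nonneg_left (hbleμ n) (le_of_lt hε0)
      have h1 : ‖BBf R (n+1) * ZZ R n‖ ≤ C + ε * mu B := by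
        rw [he]
        calc ‖AA R (n+1) + DD R n‖
            ≤ ‖AA R (n+1)‖ + ‖DD R n‖ := norm_add_le _ _
          _ ≤ C + ε * mu B := by have := hC' n; linarith
      have h2 : ‖ZZ R n‖ ≤ ‖BBf R (n+1) * ZZ R n‖ := by
        rw [norm_mul]
        nlinarith [hbge1 (n+1), norm_nonneg (ZZ R n)]
      linarith
    set c : ℝ := min (1 / (8*(V+1))) (1/(4 * mu B * Z)) with hcdef
    have hc0 : 0 < c := lt_min (by positivity) (by positivity)
    refine ⟨c, hc0, ?_⟩
    intro p q hpO hqO hq0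
    by_contra hcon
    push_neg at hcon
    have hq1 : (1:ℝ) ≤ ‖q‖ := CFaux_one_le_abs hΔneg hΔmod hqO hq0
    have hex : ∃ m : ℕ, ‖q * TH R (m+1)‖ < 1/2 := by
      obtain ⟨m, hm⟩ := exists_pow_lt_of_lt_one
        (show (0:ℝ) < 1/(2 * ‖q‖) by positivity) hε1
      refine ⟨m, ?_⟩
      have h1 : ‖q * TH R (m+1)‖ ≤ ‖q‖ * ε ^ m := by
        rw [norm_mul]
        exact mul_le_mul_of_nonneg_left (th_pow R hbne (le_of_lt hε0) m) (norm_nonneg q)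
      have h2 : ‖q‖ * ε ^ m < ‖q‖ * (1/(2 * ‖q‖)) :=
        mul_lt_mul_of_pos_left hm (by positivity)
      have h3 : ‖q‖ * (1/(2 * ‖q‖)) = 1/2 := by
        field_simp
      linarith
    obtain ⟨k, hk1, hk2⟩ : ∃ k : ℕ, ‖q * TH R (k+2)‖ < 1/2
        ∧ 1/2 ≤ ‖q * TH R (k+1)‖ := by
      have hn0 : Nat.find hex ≠ 0 := by
        intro h0
        have h1 := Nat.find_spec hex
        rw [h0, th_one, mul_neg_one, norm_neg] at h1
        linarith
      obtain ⟨k, hke⟩ : ∃ k, Nat.find hex = k + 1 := ⟨Nat.find hex - 1, by omega⟩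
      refine ⟨k, ?_, ?_⟩
      · have h1 := Nat.find_spec hex; rwa [hke] at h1
      · have h1 := Nat.find_min hex (m := k) (by omega)
        linarith [not_lt.mp h1]
    have hth1pos : 0 < ‖TH R (k+1)‖ := norm_pos_iff.mpr (th_ne R hbne k)
    have hQV : ‖QQ R (k+2)‖ * ‖TH R (k+1)‖ ≤ V := by
      have h1 := hv R hbne hbleμ hμ1 hε0 hε1 k; rwa [norm_mul] at h1
    have hqTH : 1/2 ≤ ‖q‖ * ‖TH R (k+1)‖ := by rwa [norm_mul] at hk2
    have hqTH2 : ‖q‖ * ‖TH R (k+2)‖ < 1/2 := by rwa [norm_mul] at hk1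
    have hqqz : ‖q‖ * ‖q * z - p‖ < c := by rwa [norm_mul] at hcon
    have hYmem : q * PP R (k+2) - p * QQ R (k+2) ∈ O Δ :=
      sub_mem (mul_mem hqO (pp_mem2 R k)) (mul_mem hpO (qq_mem2 R k))
    have hcle1 : c ≤ 1 / (8*(V+1)) := min_le_left _ _
    have hcle2 : c ≤ 1 / (4 * mu B * Z) := min_le_right _ _
    have hY0 : q * PP R (k+2) - p * QQ R (k+2) = 0 := by
      by_contra hYne
      have hY1 : (1:ℝ) ≤ ‖q * PP R (k+2) - p * QQ R (k+2)‖ :=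
        CFaux_one_le_abs hΔneg hΔmod hYmem hYne
      have heY : q * PP R (k+2) - p * QQ R (k+2)
          = -(q * TH R (k+2)) + QQ R (k+2) * (q * z - p) := by
        simp only [TH]; ring
      have h1 : ‖q * PP R (k+2) - p * QQ R (k+2)‖
          ≤ ‖q‖ * ‖TH R (k+2)‖
            + ‖QQ R (k+2)‖ * ‖q * z - p‖ := by
        rw [heY]
        calc ‖-(q * TH R (k+2)) + QQ R (k+2) * (q * z - p)‖
            ≤ ‖-(q * TH R (k+2))‖ + ‖QQ R (k+2) * (q*z-p)‖ :=
              norm_add_le _ _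
          _ = ‖q‖ * ‖TH R (k+2)‖
              + ‖QQ R (k+2)‖ * ‖q * z - p‖ := by
            rw [norm_neg, norm_mul, norm_mul]
      have h2 : ‖QQ R (k+2)‖ * ‖q * z - p‖ ≤ 2 * (V * c) := by
        have haux : (‖QQ R (k+2)‖ * ‖TH R (k+1)‖)
            * (‖q‖ * ‖q * z - p‖) ≤ V * c :=
          mul_le_mul hQV (le_of_lt hqqz)
            (mul_nonneg (norm_nonneg q) (norm_nonneg (q*z-p))) (le_of_lt hV0)
        nlinarith [haux, hqTH,
          mul_nonneg (norm_nonneg (QQ R (k+2))) (norm_nonneg (q*z-p))]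
      have h3 : 2 * (V * c) ≤ 1/4 := by
        have h4 : (0:ℝ) < 8*(V+1) := by positivity
        rw [le_div_iff₀ h4] at hcle1
        nlinarith [hc0, hV0]
      linarith
    have hQne : QQ R (k+2) ≠ 0 := qq_ne R hΔneg hΔmod hbne hε0 hε1 k
    have hQpos : 0 < ‖QQ R (k+2)‖ := norm_pos_iff.mpr hQne
    have hXid : (p * QQ R (k+1) - q * PP R (k+1)) * QQ R (k+2)
        = q * ((-1)^(k+1) * BBf R (k+1)) := by
      linear_combination (-(QQ R (k+1))) * hY0 + q * hD R hbne (k+1)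
    have hXne : p * QQ R (k+1) - q * PP R (k+1) ≠ 0 := by
      intro h0
      rw [h0, zero_mul] at hXid
      exact (mul_ne_zero hq0 (mul_ne_zero (pow_ne_zero _ (by norm_num)) (hbne (k+1)))) hXid.symm
    have hXmem : p * QQ R (k+1) - q * PP R (k+1) ∈ O Δ :=
      sub_mem (mul_mem hpO (qq_mem R (k+1))) (mul_mem hqO (pp_mem R (k+1)))
    have hX1 : (1:ℝ) ≤ ‖p * QQ R (k+1) - q * PP R (k+1)‖ :=
      CFaux_one_le_abs hΔneg hΔmod hXmem hXne
    have hXabs : ‖QQ R (k+2)‖ ≤ ‖q‖ * mu B := by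
      have h1 : ‖p * QQ R (k+1) - q * PP R (k+1)‖ * ‖QQ R (k+2)‖
          = ‖q‖ * ‖(-1:ℂ)^(k+1) * BBf R (k+1)‖ := by
        rw [← norm_mul, hXid, norm_mul]
      have h2 : ‖(-1:ℂ)^(k+1) * BBf R (k+1)‖ ≤ mu B := by
        rw [norm_mul, norm_pow, norm_neg, norm_one, one_pow, one_mul]
        exact hbleμ (k+1)
      nlinarith [hX1, hQpos, norm_nonneg q]
    have he2 : (q * (q * z - p)) * QQ R (k+2) = q^2 * TH R (k+2) := by
      simp only [TH]; linear_combination q * hY0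
    have hf1 : ‖q * (q*z - p)‖ * ‖QQ R (k+2)‖
        = ‖q‖ ^ 2 * ‖TH R (k+2)‖ := by
      rw [← norm_mul, he2, norm_mul, norm_pow]
    have hf2 : ‖TH R (k+1)‖ ≤ Z * ‖TH R (k+2)‖ := by
      have h3 : TH R (k+1) = -(ZZ R (k+1)) * TH R (k+2) := hG R hbne k
      rw [h3, neg_mul, norm_neg, norm_mul]
      exact mul_le_mul_of_nonneg_right (hzZ (k+1)) (norm_nonneg _)
    have haq0 : (0:ℝ) ≤ ‖q‖ := norm_nonneg q
    have hgoal : 1 / (2 * mu B * Z) ≤ ‖q * (q * z - p)‖ := by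
      have s2 : ‖q‖ * ‖TH R (k+1)‖
          ≤ ‖q‖ * (Z * ‖TH R (k+2)‖) :=
        mul_le_mul_of_nonneg_left hf2 haq0
      have s3 : (1:ℝ) ≤ 2 * (‖q‖ * (Z * ‖TH R (k+2)‖)) := by linarith
      have s4 : ‖q‖ ≤ ‖q‖ * (2 * (‖q‖ * (Z * ‖TH R (k+2)‖))) := by
        calc ‖q‖ = ‖q‖ * 1 := by ring
          _ ≤ _ := mul_le_mul_of_nonneg_left s3 haq0
      have s5 : ‖q‖ * (2 * (‖q‖ * (Z * ‖TH R (k+2)‖)))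
          = 2 * Z * (‖q‖ ^ 2 * ‖TH R (k+2)‖) := by ring
      rw [s5, ← hf1] at s4
      -- s4 : |q| ≤ 2Z * (M * |Q|)
      have s6 : ‖QQ R (k+2)‖
          ≤ (2 * Z * (‖q * (q*z-p)‖ * ‖QQ R (k+2)‖)) * mu B := by
        calc ‖QQ R (k+2)‖ ≤ ‖q‖ * mu B := hXabs
          _ ≤ _ := mul_le_mul_of_nonneg_right s4 (le_of_lt hμ0)
      have s7 : ‖QQ R (k+2)‖ * 1
          ≤ ‖QQ R (k+2)‖ * (2 * Z * mu B * ‖q * (q*z-p)‖) := by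
        calc ‖QQ R (k+2)‖ * 1 = ‖QQ R (k+2)‖ := by ring
          _ ≤ (2 * Z * (‖q * (q*z-p)‖ * ‖QQ R (k+2)‖)) * mu B := s6
          _ = ‖QQ R (k+2)‖ * (2 * Z * mu B * ‖q * (q*z-p)‖) := by ring
      have s8 : (1:ℝ) ≤ 2 * Z * mu B * ‖q * (q*z-p)‖ :=
        le_of_mul_le_mul_left s7 hQpos
      rw [div_le_iff₀ (by positivity)]
      nlinarith [s8]
    have hlt : c < 1 / (2 * mu B * Z) := by
      calc c ≤ 1/(4 * mu B * Z) := hcle2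
        _ < 1/(2 * mu B * Z) := by
          rw [div_lt_div_iff₀ (by positivity) (by positivity)]
          nlinarith [mul_pos hμ0 hZ0]
    linarith

end CFNE
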